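/- For constants a, b > 0, the Piterbarg-type constant P_{2,a}^{bt²}[0,∞) := lim_{S→∞} E[ sup_{t ∈ [0,S]} exp(√(2a) B_2(t) − a t² − b t²) ] equals (1/2)(1 + √(1 + a/b)), where B_2(t) = t·N is the degenerate fBm with Hurst index 1 and N a standard normal random variable. -/

import Mathlib

set_option maxHeartbeats 1000000
open MeasureTheory Filter ProbabilityTheory Set Real
open scoped NNReal ENNReal

namespace PitAux

lemma quad_le {d : ℝ} (hd : 0 < d) {s t u : ℝ} (h : (u - s)^2 ≤ (t - s)^2) :
    (2*d*s)*t - d*t^2 ≤ (2*d*s)*u - d*u^2 := by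
  nlinarith [mul_le_mul_of_nonneg_left h hd.le]

noncomputable def tc (c d x S : ℝ) : ℝ := min (max (c*x/(2*d)) 0) S

noncomputable def phi (c d x S : ℝ) : ℝ :=
  Real.exp (c*x*(tc c d x S) - d*(tc c d x S)^2)

lemma tc_sq_le (c : ℝ) {d : ℝ} (hd : 0 < d) (x : ℝ) {S : ℝ} (hS : 0 ≤ S)
    {t : ℝ} (ht : t ∈ Icc (0:ℝ) S) :
    (tc c d x S - c*x/(2*d))^2 ≤ (t - c*x/(2*d))^2 := by
  rcases le_or_gt (c*x/(2*d)) 0 with hs0 | hs0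
  · have h0 : tc c d x S = 0 := by rw [tc, max_eq_right hs0, min_eq_left hS]
    rw [h0]; nlinarith [ht.1]
  · rcases le_or_gt (c*x/(2*d)) S with hsS | hsS
    · have h0 : tc c d x S = c*x/(2*d) := by rw [tc, max_eq_left hs0.le, min_eq_left hsS]
      rw [h0]; nlinarith [sq_nonneg (t - c*x/(2*d))]
    · have h0 : tc c d x S = S := by rw [tc, max_eq_left hs0.le, min_eq_right hsS.le]
      rw [h0]; nlinarith [ht.2]

lemma quad_le' {c d : ℝ} (hd : 0 < d) {x t u : ℝ}
    (h : (u - c*x/(2*d))^2 ≤ (t - c*x/(2*d))^2) :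
    c*x*t - d*t^2 ≤ c*x*u - d*u^2 := by
  have hcx : c*x = 2*d*(c*x/(2*d)) := by field_simp
  rw [hcx]
  exact quad_le hd h

lemma sup_eq (a b c x : ℝ) (hd : 0 < a + b) {S : ℝ} (hS : 0 ≤ S) :
    (⨆ t : Set.Icc (0:ℝ) S, Real.exp (c * t * x - a * t^2 - b * t^2))
      = phi c (a+b) x S := by
  have htc : tc c (a+b) x S ∈ Icc (0:ℝ) S :=
    ⟨le_min (le_max_right _ _) hS, min_le_right _ _⟩
  have hgr : IsGreatest
      (Set.range fun t : Set.Icc (0:ℝ) S => Real.exp (c * t * x - a * t^2 - b * t^2))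
      (phi c (a+b) x S) := by
    constructor
    · refine ⟨⟨tc c (a+b) x S, htc⟩, ?_⟩
      show Real.exp (c * (tc c (a+b) x S) * x - a * (tc c (a+b) x S)^2
        - b * (tc c (a+b) x S)^2) = _
      rw [phi]; ring_nf
    · rintro v ⟨t, rfl⟩
      show Real.exp (c * (t:ℝ) * x - a * (t:ℝ)^2 - b * (t:ℝ)^2) ≤ _
      rw [phi]
      have h1 : c * (t:ℝ) * x - a * (t:ℝ)^2 - b * (t:ℝ)^2
          = c*x*(t:ℝ) - (a+b)*(t:ℝ)^2 := by ring
      rw [h1]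
      exact Real.exp_le_exp.mpr (quad_le' hd (tc_sq_le c hd x hS t.2))
  exact hgr.csSup_eq

lemma phi_mono {c d x : ℝ} (hd : 0 < d) {S S' : ℝ} (h0 : 0 ≤ S) (h : S ≤ S') :
    phi c d x S ≤ phi c d x S' := by
  have h0' : 0 ≤ S' := h0.trans h
  rw [phi, phi]
  apply Real.exp_le_exp.mpr
  apply quad_le' hd
  rcases le_or_gt (c*x/(2*d)) 0 with hs0 | hs0
  · have e1 : tc c d x S = 0 := by rw [tc, max_eq_right hs0, min_eq_left h0]
    have e2 : tc c d x S' = 0 := by rw [tc, max_eq_right hs0, min_eq_left h0']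
    rw [e1, e2]
  · have e1 : tc c d x S = min (c*x/(2*d)) S := by rw [tc, max_eq_left hs0.le]
    have e2 : tc c d x S' = min (c*x/(2*d)) S' := by rw [tc, max_eq_left hs0.le]
    rw [e1, e2]
    have hle : min (c*x/(2*d)) S ≤ min (c*x/(2*d)) S' := min_le_min le_rfl h
    have h1 : min (c*x/(2*d)) S ≤ c*x/(2*d) := min_le_left _ _
    have h2 : min (c*x/(2*d)) S' ≤ c*x/(2*d) := min_le_left _ _
    nlinarith

lemma phi_le {c d x : ℝ} (hd : 0 < d) {S : ℝ} (h0 : 0 ≤ S) :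
    phi c d x S ≤ Real.exp (c*x*(max (c*x/(2*d)) 0) - d*(max (c*x/(2*d)) 0)^2) := by
  rw [phi]
  apply Real.exp_le_exp.mpr
  apply quad_le' hd
  rcases le_or_gt (c*x/(2*d)) 0 with hs0 | hs0
  · have e1 : tc c d x S = 0 := by rw [tc, max_eq_right hs0, min_eq_left h0]
    rw [e1, max_eq_right hs0]
  · rw [max_eq_left hs0.le, tc, max_eq_left hs0.le]
    have h1 : min (c*x/(2*d)) S ≤ c*x/(2*d) := min_le_left _ _
    nlinarith

lemma phi_eq_of_ge {c d x : ℝ} {S : ℝ} (h : max (c*x/(2*d)) 0 ≤ S) :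
    phi c d x S = Real.exp (c*x*(max (c*x/(2*d)) 0) - d*(max (c*x/(2*d)) 0)^2) := by
  rw [phi, tc, min_eq_left h]

/-- value of the limit function -/
lemma limit_eq {c d : ℝ} (hc : 0 < c) (hd : 0 < d) (x : ℝ) :
    Real.exp (c*x*(max (c*x/(2*d)) 0) - d*(max (c*x/(2*d)) 0)^2)
      = Real.exp (c^2/(4*d) * (max x 0)^2) := by
  rcases le_or_gt x 0 with hx | hx
  · have h1 : c*x/(2*d) ≤ 0 :=
      div_nonpos_iff.mpr (Or.inr ⟨mul_nonpos_of_nonneg_of_nonpos hc.le hx, by linarith⟩)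
    rw [max_eq_right h1, max_eq_right hx]
    norm_num
  · have h1 : 0 ≤ c*x/(2*d) := by positivity
    rw [max_eq_left h1, max_eq_left hx.le]
    congr 1
    field_simp
    ring

lemma phi_continuous (c d S : ℝ) : Continuous (fun x => phi c d x S) := by
  simp only [phi, tc]
  fun_prop

end PitAux

namespace PitAux2

lemma pdf_eq (x : ℝ) :
    gaussianPDFReal 0 1 x = (Real.sqrt (2*Real.pi))⁻¹ * Real.exp (-x^2/2) := by
  simp [gaussianPDFReal]

lemma max_sq_le (x : ℝ) : (max x 0)^2 ≤ x^2 := by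
  rcases le_total x 0 with h | h
  · rw [max_eq_right h]; simpa using sq_nonneg x
  · rw [max_eq_left h]

lemma cont_target (l : ℝ) : Continuous (fun x : ℝ => Real.exp (l * (max x 0)^2)) := by
  fun_prop

lemma bound_aux {l : ℝ} (hl0 : 0 ≤ l) (x : ℝ) :
    Real.exp (l * (max x 0)^2) * gaussianPDFReal 0 1 x
      ≤ (Real.sqrt (2*Real.pi))⁻¹ * Real.exp (-(1/2 - l) * x^2) := by
  rw [pdf_eq]
  have h1 : Real.exp (l * (max x 0)^2) * ((Real.sqrt (2*Real.pi))⁻¹ * Real.exp (-x^2/2))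
      = (Real.sqrt (2*Real.pi))⁻¹ * Real.exp (l * (max x 0)^2 + -x^2/2) := by
    rw [Real.exp_add]; ring
  rw [h1]
  have h2 : l * (max x 0)^2 + -x^2/2 ≤ -(1/2 - l) * x^2 := by
    have := mul_le_mul_of_nonneg_left (max_sq_le x) hl0
    nlinarith
  have h3 : (0:ℝ) ≤ (Real.sqrt (2*Real.pi))⁻¹ := by positivity
  exact mul_le_mul_of_nonneg_left (Real.exp_le_exp.mpr h2) h3

lemma integrable_mul_pdf {l : ℝ} (hl0 : 0 ≤ l) (hl : l < 1/2) :
    Integrable (fun x => Real.exp (l * (max x 0)^2) * gaussianPDFReal 0 1 x) := by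
  have hk : (0:ℝ) < 1/2 - l := by linarith
  apply Integrable.mono' ((integrable_exp_neg_mul_sq hk).const_mul ((Real.sqrt (2*Real.pi))⁻¹))
  · exact ((cont_target l).measurable.mul (measurable_gaussianPDFReal 0 1)).aestronglyMeasurable
  · refine ae_of_all _ fun x => ?_
    rw [Real.norm_eq_abs, abs_of_nonneg (mul_nonneg (Real.exp_pos _).le (gaussianPDFReal_nonneg 0 1 x))]
    exact bound_aux hl0 x

lemma integrable_target {l : ℝ} (hl0 : 0 ≤ l) (hl : l < 1/2) :
    Integrable (fun x => Real.exp (l * (max x 0)^2)) (gaussianReal 0 1) := by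
  rw [gaussianReal_of_var_ne_zero 0 one_ne_zero,
    integrable_withDensity_iff (measurable_gaussianPDF 0 1)
      (ae_of_all _ fun x => ENNReal.ofReal_lt_top)]
  have : (fun x => Real.exp (l * (max x 0)^2) * (gaussianPDF 0 1 x).toReal)
      = fun x => Real.exp (l * (max x 0)^2) * gaussianPDFReal 0 1 x := by
    funext x
    rw [gaussianPDF, ENNReal.toReal_ofReal (gaussianPDFReal_nonneg 0 1 x)]
  rw [this]
  exact integrable_mul_pdf hl0 hl

lemma integral_target {l : ℝ} (hl0 : 0 ≤ l) (hl : l < 1/2) :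
    ∫ x, Real.exp (l * (max x 0)^2) ∂(gaussianReal 0 1)
      = 1/2 + 1/(2 * Real.sqrt (1 - 2*l)) := by
  have hk : (0:ℝ) < 1/2 - l := by linarith
  rw [gaussianReal_of_var_ne_zero 0 one_ne_zero]
  have hpdf : gaussianPDF 0 1
      = fun x => ((Real.toNNReal (gaussianPDFReal 0 1 x) : ℝ≥0) : ℝ≥0∞) := rfl
  rw [hpdf, integral_withDensity_eq_integral_smul
    ((measurable_gaussianPDFReal 0 1).real_toNNReal) _]
  have hsm : ∀ x : ℝ, (Real.toNNReal (gaussianPDFReal 0 1 x) : ℝ≥0)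
        • Real.exp (l * (max x 0)^2)
      = Real.exp (l * (max x 0)^2) * gaussianPDFReal 0 1 x := by
    intro x
    rw [NNReal.smul_def, smul_eq_mul,
      Real.coe_toNNReal _ (gaussianPDFReal_nonneg 0 1 x), mul_comm]
  simp_rw [hsm]
  -- split the integral
  have hint := integrable_mul_pdf hl0 hl
  rw [← intervalIntegral.integral_Iic_add_Ioi (b := (0:ℝ)) hint.integrableOn hint.integrableOn]
  have hIic : ∫ x in Iic (0:ℝ), Real.exp (l * (max x 0)^2) * gaussianPDFReal 0 1 x
      = (Real.sqrt (2*Real.pi))⁻¹ * (Real.sqrt (Real.pi/(1/2))/2) := by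
    rw [setIntegral_congr_fun measurableSet_Iic (g := fun x =>
        (Real.sqrt (2*Real.pi))⁻¹ * Real.exp (-(1/2) * x^2)) ?_]
    · rw [integral_const_mul]
      congr 1
      have := integral_comp_neg_Ioi (0:ℝ) (fun x => Real.exp (-(1/2) * x^2))
      simp only [neg_zero, neg_sq] at this
      rw [← this, integral_gaussian_Ioi]
    · intro x hx
      dsimp only
      rw [pdf_eq, max_eq_right (mem_Iic.mp hx)]
      have h0 : l * (0:ℝ)^2 = 0 := by ring
      have h1 : -x^2/2 = -(1/2)*x^2 := by ring
      rw [h0, h1, Real.exp_zero, one_mul]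
  have hIoi : ∫ x in Ioi (0:ℝ), Real.exp (l * (max x 0)^2) * gaussianPDFReal 0 1 x
      = (Real.sqrt (2*Real.pi))⁻¹ * (Real.sqrt (Real.pi/(1/2 - l))/2) := by
    rw [setIntegral_congr_fun measurableSet_Ioi (g := fun x =>
        (Real.sqrt (2*Real.pi))⁻¹ * Real.exp (-(1/2 - l) * x^2)) ?_]
    · rw [integral_const_mul, integral_gaussian_Ioi]
    · intro x hx
      dsimp only
      rw [pdf_eq, max_eq_left (le_of_lt (mem_Ioi.mp hx))]
      rw [mul_comm, mul_assoc, ← Real.exp_add]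
      congr 2
      ring
  rw [hIic, hIoi]
  -- algebra
  have hπ : (0:ℝ) < Real.pi := Real.pi_pos
  have h2π : (0:ℝ) < Real.sqrt (2*Real.pi) := Real.sqrt_pos.mpr (by positivity)
  have h1l : (0:ℝ) < Real.sqrt (1 - 2*l) := Real.sqrt_pos.mpr (by linarith)
  have e1 : Real.sqrt (Real.pi/(1/2)) = Real.sqrt (2*Real.pi) := by
    congr 1; ring
  have key : Real.sqrt (Real.pi/(1/2 - l)) * Real.sqrt (1 - 2*l) = Real.sqrt (2*Real.pi) := by
    rw [← Real.sqrt_mul (by positivity)]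
    congr 1
    rw [div_mul_eq_mul_div, div_eq_iff hk.ne']
    ring
  rw [e1, show Real.sqrt (Real.pi/(1/2 - l)) = Real.sqrt (2*Real.pi) / Real.sqrt (1 - 2*l)
    from eq_div_of_mul_eq h1l.ne' key]
  field_simp

end PitAux2

open PitAux PitAux2

/-- for `B₂(t) = t·N` with `N` standard normal and `a, b > 0`,
`lim_{S→∞} E[ sup_{t∈[0,S]} exp(√(2a) t N − a t² − b t²) ] = (1/2)(1 + √(1 + a/b))`. -/
theorem piterbarg_constant_alpha_two
    {Ω : Type*} [MeasurableSpace Ω] (P : Measure Ω) [IsProbabilityMeasure P]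
    (N : Ω → ℝ) (hmeas : Measurable N)
    (hlaw : Measure.map N P = gaussianReal 0 1)
    (a b : ℝ) (ha : 0 < a) (hb : 0 < b) :
    Tendsto (fun S : ℝ =>
        ∫ ω, (⨆ t : Set.Icc (0 : ℝ) S,
          Real.exp (Real.sqrt (2 * a) * t * N ω - a * t ^ 2 - b * t ^ 2)) ∂P)
      atTop (nhds (1 / 2 * (1 + Real.sqrt (1 + a / b)))) := by
  have hd : (0:ℝ) < a + b := by linarith
  obtain ⟨c, hc_def⟩ : ∃ c : ℝ, c = Real.sqrt (2*a) := ⟨_, rfl⟩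
  obtain ⟨l, hl_def⟩ : ∃ l : ℝ, l = 2*a/(4*(a+b)) := ⟨_, rfl⟩
  have hc : 0 < c := hc_def ▸ Real.sqrt_pos.mpr (by linarith)
  have hc2 : c^2 = 2*a := by rw [hc_def]; exact Real.sq_sqrt (by linarith)
  have hl0 : 0 ≤ l := by rw [hl_def]; positivity
  have hl : l < 1/2 := by
    rw [hl_def, div_lt_iff₀ (by linarith)]; linarith
  have hcl : c^2/(4*(a+b)) = l := by rw [hc2, hl_def]
  -- the pointwise limit function value
  have hlim : ∀ x : ℝ, Real.exp (c*x*(max (c*x/(2*(a+b))) 0)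
      - (a+b)*(max (c*x/(2*(a+b))) 0)^2) = Real.exp (l * (max x 0)^2) := by
    intro x
    rw [limit_eq hc hd x, hcl]
  have hgcont : Continuous (fun x : ℝ => Real.exp (l * (max x 0)^2)) := cont_target l
  -- integrability of the limit under P
  have hFint : Integrable (fun ω => Real.exp (l * (max (N ω) 0)^2)) P := by
    have h1 : Integrable (fun x : ℝ => Real.exp (l * (max x 0)^2)) (Measure.map N P) := by
      rw [hlaw]; exact integrable_target hl0 hl
    exact (integrable_map_measure hgcont.aestronglyMeasurable hmeas.aemeasurable).mp h1
  -- integrability of phi at each time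
  have hphile : ∀ (S : ℝ), 0 ≤ S → ∀ ω,
      phi c (a+b) (N ω) S ≤ Real.exp (l * (max (N ω) 0)^2) := by
    intro S hS ω
    calc phi c (a+b) (N ω) S
        ≤ Real.exp (c*(N ω)*(max (c*(N ω)/(2*(a+b))) 0)
            - (a+b)*(max (c*(N ω)/(2*(a+b))) 0)^2) := phi_le hd hS
      _ = Real.exp (l * (max (N ω) 0)^2) := hlim (N ω)
  have hphiint : ∀ (S : ℝ), 0 ≤ S → Integrable (fun ω => phi c (a+b) (N ω) S) P := by
    intro S hS
    apply Integrable.mono' hFint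
      (((phi_continuous c (a+b) S).measurable.comp hmeas).aestronglyMeasurable)
    refine ae_of_all _ fun ω => ?_
    simp only [Function.comp_apply]
    have hpos : 0 ≤ phi c (a+b) (N ω) S := by rw [phi]; positivity
    rw [Real.norm_eq_abs, abs_of_nonneg hpos]
    exact hphile S hS ω
  -- monotone convergence along naturals
  have hMCT : Tendsto (fun n : ℕ => ∫ ω, phi c (a+b) (N ω) n ∂P) atTop
      (nhds (∫ ω, Real.exp (l * (max (N ω) 0)^2) ∂P)) := by
    apply integral_tendsto_of_tendsto_of_monotone
      (fun n => hphiint n (Nat.cast_nonneg n)) hFint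
    · refine ae_of_all _ fun ω n m hnm => ?_
      exact phi_mono hd (Nat.cast_nonneg n) (Nat.cast_le.mpr hnm)
    · refine ae_of_all _ fun ω => ?_
      apply Tendsto.congr' _ tendsto_const_nhds
      filter_upwards [eventually_ge_atTop ⌈max (c*(N ω)/(2*(a+b))) 0⌉₊] with n hn
      have h1 : max (c*(N ω)/(2*(a+b))) 0 ≤ (n:ℝ) :=
        le_trans (Nat.le_ceil _) (Nat.cast_le.mpr hn)
      rw [phi_eq_of_ge h1, hlim (N ω)]
  -- identify the limit value
  have hval : ∫ ω, Real.exp (l * (max (N ω) 0)^2) ∂P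
      = 1/2 * (1 + Real.sqrt (1 + a/b)) := by
    have h1 : ∫ ω, Real.exp (l * (max (N ω) 0)^2) ∂P
        = ∫ x, Real.exp (l * (max x 0)^2) ∂(Measure.map N P) :=
      (integral_map hmeas.aemeasurable hgcont.aestronglyMeasurable).symm
    rw [h1, hlaw, integral_target hl0 hl]
    -- algebra
    have h12 : 1 - 2*l = b/(a+b) := by
      rw [hl_def]; field_simp; ring
    have hsb : (0:ℝ) < Real.sqrt (b/(a+b)) := Real.sqrt_pos.mpr (by positivity)
    have he : Real.sqrt (1 + a/b) = (Real.sqrt (b/(a+b)))⁻¹ := by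
      rw [← Real.sqrt_inv]
      congr 1
      rw [inv_div]
      field_simp
      ring
    rw [h12, he]
    field_simp
  rw [← hval]
  -- squeeze between floor and floor+1
  have hfloor : Tendsto (fun S : ℝ => ∫ ω, phi c (a+b) (N ω) (⌊S⌋₊ : ℝ) ∂P) atTop
      (nhds (∫ ω, Real.exp (l * (max (N ω) 0)^2) ∂P)) :=
    hMCT.comp tendsto_nat_floor_atTop
  have hfloor1 : Tendsto (fun S : ℝ => ∫ ω, phi c (a+b) (N ω) ((⌊S⌋₊ + 1 : ℕ) : ℝ) ∂P) atTop
      (nhds (∫ ω, Real.exp (l * (max (N ω) 0)^2) ∂P)) :=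
    (hMCT.comp (tendsto_add_atTop_nat 1)).comp tendsto_nat_floor_atTop
  apply tendsto_of_tendsto_of_tendsto_of_le_of_le' hfloor hfloor1
  · filter_upwards [eventually_ge_atTop (0:ℝ)] with S hS
    have hIeq : (∫ ω, (⨆ t : Set.Icc (0 : ℝ) S,
          Real.exp (Real.sqrt (2 * a) * t * N ω - a * t ^ 2 - b * t ^ 2)) ∂P)
        = ∫ ω, phi c (a+b) (N ω) S ∂P := by
      apply integral_congr_ae
      refine ae_of_all _ fun ω => ?_
      rw [← hc_def]
      exact sup_eq a b c (N ω) hd hS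
    rw [hIeq]
    exact integral_mono (hphiint _ (Nat.cast_nonneg _)) (hphiint S hS)
      (fun ω => phi_mono hd (Nat.cast_nonneg _) (Nat.floor_le hS))
  · filter_upwards [eventually_ge_atTop (0:ℝ)] with S hS
    have hIeq : (∫ ω, (⨆ t : Set.Icc (0 : ℝ) S,
          Real.exp (Real.sqrt (2 * a) * t * N ω - a * t ^ 2 - b * t ^ 2)) ∂P)
        = ∫ ω, phi c (a+b) (N ω) S ∂P := by
      apply integral_congr_ae
      refine ae_of_all _ fun ω => ?_
      rw [← hc_def]
      exact sup_eq a b c (N ω) hd hS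
    rw [hIeq]
    have hS1 : S ≤ ((⌊S⌋₊ + 1 : ℕ) : ℝ) := by
      push_cast
      exact (Nat.lt_floor_add_one S).le
    exact integral_mono (hphiint S hS) (hphiint _ (Nat.cast_nonneg _))
      (fun ω => phi_mono hd hS hS1)
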